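/- There exists a constant C (independent of n) such that: for all n, any family A of subsets of {1,...,n} with |A \ B| ≠ 1 for all distinct A, B in A satisfies |A| ≤ (C/n)·2^n. -/

import Mathlib

theorem stmt_15 :
    ∃ C : ℝ, ∀ n : ℕ, ∀ 𝒜 : Finset (Finset (Fin n)),
      (∀ A ∈ 𝒜, ∀ B ∈ 𝒜, A ≠ B → (A \ B).card ≠ 1) →
      (𝒜.card : ℝ) * n ≤ C * 2 ^ n := by
  use 2
  intro n 𝒜 h
  have key : 𝒜.card * n ≤ 2 ^ n * 2 := by
    have hinj := Finset.card_le_card_of_injOn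
      (f := fun p : Finset (Fin n) × Fin n =>
        ((if p.2 ∈ p.1 then p.1.erase p.2 else insert p.2 p.1), decide (p.2 ∈ p.1)))
      (s := 𝒜 ×ˢ Finset.univ) (t := 𝒜ᶜ ×ˢ (Finset.univ : Finset Bool)) ?_ ?_
    · have h1 : (𝒜 ×ˢ (Finset.univ : Finset (Fin n))).card = 𝒜.card * n := by
        simp [Finset.card_product]
      have h2 : (𝒜ᶜ ×ˢ (Finset.univ : Finset Bool)).card ≤ 2 ^ n * 2 := by
        have : (𝒜ᶜ).card ≤ 2 ^ n := by
          calc (𝒜ᶜ).card ≤ Fintype.card (Finset (Fin n)) := Finset.card_le_univ _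
          _ = 2 ^ n := by simp
        simpa [Finset.card_product] using Nat.mul_le_mul_right 2 this
      omega
    · -- maps into
      rintro ⟨A, x⟩ hp
      simp only [Finset.coe_product, Set.mem_prod, Finset.mem_coe, Finset.mem_univ, and_true] at hp ⊢
      simp only [Finset.mem_compl]
      intro hC
      by_cases hx : x ∈ A
      · simp only [hx, if_true] at hC
        refine h A hp (A.erase x) hC ?_ ?_
        · intro hE
          exact (Finset.notMem_erase x A) (hE ▸ hx)
        · have : A \ A.erase x = {x} := by
            ext a
            simp only [Finset.mem_sdiff, Finset.mem_erase, Finset.mem_singleton]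
            constructor
            · rintro ⟨ha, hna⟩
              by_contra hax
              exact hna ⟨hax, ha⟩
            · rintro rfl
              exact ⟨hx, fun h' => h'.1 rfl⟩
          rw [this]; simp
      · simp only [hx, if_false] at hC
        refine h (insert x A) hC A hp ?_ ?_
        · intro hE
          exact hx (hE ▸ Finset.mem_insert_self x A)
        · have : insert x A \ A = {x} := by
            ext a
            simp only [Finset.mem_sdiff, Finset.mem_insert, Finset.mem_singleton]
            constructor
            · rintro ⟨ha | ha, hna⟩
              · exact ha
              · exact absurd ha hna
            · rintro rfl
              exact ⟨Or.inl rfl, hx⟩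
          rw [this]; simp
    · -- injective on s
      rintro ⟨A, x⟩ hp ⟨A', x'⟩ hp' heq
      simp only [Finset.mem_coe, Finset.mem_product, Finset.mem_univ, and_true] at hp hp'
      simp only [Prod.mk.injEq] at heq
      obtain ⟨hC, hb⟩ := heq
      have hb' : (x ∈ A ↔ x' ∈ A') := by exact_mod_cast decide_eq_decide.mp hb
      by_cases hx : x ∈ A
      · have hx' : x' ∈ A' := by
          by_contra hx'
          simp [hx, hx'] at hb
        simp only [hx, hx', if_true] at hC
        by_cases hxx : x = x'
        · subst hxx
          have : A = A' := by
            have := congrArg (insert x) hC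
            rwa [Finset.insert_erase hx, Finset.insert_erase hx'] at this
          simp [this]
        · exfalso
          have hx'A : x' ∉ A := by
            intro hmem
            have : x' ∈ A.erase x := Finset.mem_erase.mpr ⟨fun h' => hxx (h'.symm), hmem⟩
            rw [hC] at this
            exact (Finset.notMem_erase x' A') this
          have hne : A ≠ A' := fun hE => hx'A (hE ▸ hx')
          refine h A' hp' A hp hne.symm ?_
          have : A' \ A = {x'} := by
            ext a
            simp only [Finset.mem_sdiff, Finset.mem_singleton]
            constructor
            · rintro ⟨ha, hna⟩
              by_contra hax
              have : a ∈ A'.erase x' := Finset.mem_erase.mpr ⟨hax, ha⟩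
              rw [← hC] at this
              exact hna (Finset.mem_of_mem_erase this)
            · rintro rfl
              exact ⟨hx', hx'A⟩
          rw [this]; simp
      · have hx' : x' ∉ A' := by
          by_contra hx'
          simp [hx, hx'] at hb
        simp only [hx, hx', if_false] at hC
        by_cases hxx : x = x'
        · subst hxx
          have : A = A' := by
            have := congrArg (fun s => Finset.erase s x) hC
            simpa [Finset.erase_insert hx, Finset.erase_insert hx'] using this
          simp [this]
        · exfalso
          have hx'A : x' ∈ A := by
            have : x' ∈ insert x A := hC ▸ Finset.mem_insert_self x' A'
            rcases Finset.mem_insert.mp this with h' | h'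
            · exact absurd h'.symm hxx
            · exact h'
          have hne : A ≠ A' := fun hE => hx' (hE ▸ hx'A)
          refine h A hp A' hp' hne ?_
          have : A \ A' = {x'} := by
            ext a
            simp only [Finset.mem_sdiff, Finset.mem_singleton]
            constructor
            · rintro ⟨ha, hna⟩
              have : a ∈ insert x' A' := hC ▸ Finset.mem_insert_of_mem ha
              rcases Finset.mem_insert.mp this with h' | h'
              · exact h'
              · exact absurd h' hna
            · rintro rfl
              exact ⟨hx'A, hx'⟩
          rw [this]; simp
  have : (𝒜.card : ℝ) * n ≤ 2 ^ n * 2 := by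
    exact_mod_cast key
  linarith
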